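/- Let (X,d) be a complete metric space, T : X → X, and E : (0,∞) → (0,∞) a function such that E(t) < t for all t > 0, and such that for every t > 0 and every sequence (t_n) ⊂ (t,∞) with t_n → t one has liminf_n E(t_n) < t. If d(Tx,Ty) ≤ E(d(x,y)) for all x,y ∈ X with x ≠ y, then T is a Picard operator. -/

import Mathlib

open Filter Topology

/-- `T` is a Picard operator: it has a unique fixed point `u` and every
sequence of iterates converges to `u`. -/
def IsPicardOperator {X : Type*} [MetricSpace X] (T : X → X) : Prop :=
  ∃ u : X, T u = u ∧ (∀ v : X, T v = v → v = u) ∧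
    ∀ x : X, Tendsto (fun n => T^[n] x) atTop (𝓝 u)

/-- `T` is contractive: `d(Tx,Ty) < d(x,y)` whenever `x ≠ y`. -/
def Contractive {X : Type*} [MetricSpace X] (T : X → X) : Prop :=
  ∀ x y : X, x ≠ y → dist (T x) (T y) < dist x y

/-- The Matkowski–Węgrzyk condition. -/
def MWCondition {X : Type*} [MetricSpace X] (T : X → X) : Prop :=
  ∀ ε > (0 : ℝ), ∃ δ > (0 : ℝ), ∀ x y : X,
    ε < dist x y → dist x y < ε + δ → dist (T x) (T y) ≤ ε

/-- `T` is a CJMP-contraction. -/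
lemma orbit_conv {X : Type*} [MetricSpace X] [CompleteSpace X] (T : X → X)
    (hle : ∀ a b : X, dist (T a) (T b) ≤ dist a b)
    (hstrict : ∀ a b : X, a ≠ b → dist (T a) (T b) < dist a b)
    (hMW : MWCondition T) (x : X) :
    ∃ u : X, T u = u ∧ Tendsto (fun n => T^[n] x) atTop (𝓝 u) := by
  set c : ℕ → ℝ := fun n => dist (T^[n] x) (T^[n+1] x) with hc
  have hcsucc : ∀ n, c (n+1) ≤ c n := by
    intro n
    simp only [hc, Function.iterate_succ_apply']
    exact hle _ _
  have hanti : Antitone c := antitone_nat_of_succ_le hcsucc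
  have hcnonneg : ∀ n, 0 ≤ c n := fun n => dist_nonneg
  set L : ℝ := ⨅ n, c n with hL
  have hbdd : BddBelow (Set.range c) := ⟨0, by rintro _ ⟨n, rfl⟩; exact hcnonneg n⟩
  have hLle : ∀ n, L ≤ c n := fun n => ciInf_le hbdd n
  have hctend : Tendsto c atTop (𝓝 L) := tendsto_atTop_ciInf hanti hbdd
  have hL0 : L = 0 := by
    by_contra hne
    have hLpos : 0 < L := lt_of_le_of_ne (le_ciInf hcnonneg) (Ne.symm hne)
    obtain ⟨δ, hδ, hMWL⟩ := hMW L hLpos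
    have hev : ∀ᶠ n in atTop, c n < L + δ :=
      hctend.eventually (gt_mem_nhds (lt_add_of_pos_right L hδ))
    obtain ⟨n, hn⟩ := hev.exists
    have hLlt : ∀ m, L < c m := by
      intro m
      rcases lt_or_eq_of_le (hLle m) with h | h
      · exact h
      · exfalso
        have hne' : T^[m] x ≠ T^[m+1] x := by
          intro heq
          rw [hc] at h
          simp [← heq] at h
          exact hne h
        have := hstrict _ _ hne'
        have h2 : c (m+1) < c m := by
          simpa only [hc, Function.iterate_succ_apply'] using this
        exact absurd (hLle (m+1)) (not_le.mpr (h2.trans_eq h.symm))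
    have : dist (T (T^[n] x)) (T (T^[n+1] x)) ≤ L := hMWL _ _ (hLlt n) hn
    have h2 : c (n+1) ≤ L := by
      simpa only [hc, Function.iterate_succ_apply'] using this
    exact absurd h2 (not_le.mpr (hLlt (n+1)))
  have hc0 : Tendsto c atTop (𝓝 0) := hL0 ▸ hctend
  -- Cauchy
  have hcauchy : CauchySeq (fun n => T^[n] x) := by
    rw [Metric.cauchySeq_iff']
    intro ε hε
    obtain ⟨δ, hδ, hMWε⟩ := hMW (ε/2) (half_pos hε)
    set δ' : ℝ := min δ (ε/2) with hδ'def
    have hδ' : 0 < δ' := lt_min hδ (half_pos hε)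
    obtain ⟨N, hN⟩ := (hc0.eventually (gt_mem_nhds hδ')).exists
    refine ⟨N, fun n hn => ?_⟩
    have key : ∀ m, dist (T^[N] x) (T^[N+m] x) < ε/2 + δ' := by
      intro m
      induction m with
      | zero => simpa using add_pos (half_pos hε) hδ'
      | succ m ih =>
        have step : dist (T^[N+1] x) (T^[N+m+1] x) ≤ ε/2 := by
          rw [show N+1 = N+1 from rfl, Function.iterate_succ_apply',
            show N+m+1 = (N+m)+1 from rfl, Function.iterate_succ_apply']
          rcases le_or_gt (dist (T^[N] x) (T^[N+m] x)) (ε/2) with h | h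
          · exact (hle _ _).trans h
          · exact hMWε _ _ h (ih.trans_le (add_le_add le_rfl (min_le_left _ _)))
        calc dist (T^[N] x) (T^[N+(m+1)] x)
            ≤ dist (T^[N] x) (T^[N+1] x) + dist (T^[N+1] x) (T^[N+m+1] x) :=
              dist_triangle _ _ _
          _ < δ' + ε/2 := add_lt_add_of_lt_of_le hN step
          _ = ε/2 + δ' := add_comm _ _
    have := key (n - N)
    rw [Nat.add_sub_cancel' hn] at this
    rw [dist_comm]
    calc dist (T^[N] x) (T^[n] x) < ε/2 + δ' := this
      _ ≤ ε/2 + ε/2 := add_le_add le_rfl (min_le_right _ _)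
      _ = ε := add_halves ε
  obtain ⟨u, hu⟩ := cauchySeq_tendsto_of_complete hcauchy
  refine ⟨u, ?_, hu⟩
  have lip : LipschitzWith 1 T := LipschitzWith.of_dist_le_mul (by simpa using hle)
  have h1 : Tendsto (fun n => T^[n+1] x) atTop (𝓝 u) :=
    hu.comp (tendsto_add_atTop_nat 1)
  have h2 : Tendsto (fun n => T (T^[n] x)) atTop (𝓝 (T u)) :=
    (lip.continuous.tendsto u).comp hu
  have := tendsto_nhds_unique (by simpa [Function.iterate_succ_apply'] using h1) h2
  exact this.symm

def IsCJMP {X : Type*} [MetricSpace X] (T : X → X) : Prop :=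
  Contractive T ∧ MWCondition T

theorem stmt_9 {X : Type*} [MetricSpace X] [CompleteSpace X] [Nonempty X] (T : X → X)
    (E : ℝ → ℝ) (hEpos : ∀ t > (0 : ℝ), 0 < E t)
    (h1 : ∀ t > (0 : ℝ), E t < t)
    (h2 : ∀ t > (0 : ℝ), ∀ tn : ℕ → ℝ, (∀ n, t < tn n) → Tendsto tn atTop (𝓝 t) →
      liminf (fun n => E (tn n)) atTop < t)
    (hcontr : ∀ x y : X, x ≠ y → dist (T x) (T y) ≤ E (dist x y)) :
    IsPicardOperator T := by
  have hstrict : ∀ a b : X, a ≠ b → dist (T a) (T b) < dist a b := by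
    intro a b hab
    exact (hcontr a b hab).trans_lt (h1 _ (dist_pos.mpr hab))
  have hle : ∀ a b : X, dist (T a) (T b) ≤ dist a b := by
    intro a b
    rcases eq_or_ne a b with rfl | hab
    · simp
    · exact (hstrict a b hab).le
  have hMW : MWCondition T := by
    intro ε hε
    by_contra hcon
    push_neg at hcon
    choose u v hu hv hw using fun n : ℕ =>
      hcon (1/(n+1) : ℝ) (by positivity)
    set tn : ℕ → ℝ := fun n => dist (u n) (v n) with htn
    have hlt : ∀ n, ε < tn n := hu
    have hub : ∀ n, tn n < ε + 1/(n+1) := hv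
    have htend : Tendsto tn atTop (𝓝 ε) := by
      have hup : Tendsto (fun n : ℕ => ε + 1/(n+1)) atTop (𝓝 ε) := by
        have : Tendsto (fun n : ℕ => 1 / ((n : ℝ) + 1)) atTop (𝓝 0) :=
          tendsto_one_div_add_atTop_nhds_zero_nat
        simpa using (tendsto_const_nhds (x := ε)).add this
      exact tendsto_of_tendsto_of_tendsto_of_le_of_le tendsto_const_nhds hup
        (fun n => (hlt n).le) (fun n => (hub n).le)
    have hliminf := h2 ε hε tn hlt htend
    have hne : ∀ n, u n ≠ v n := by
      intro n heq
      have := hlt n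
      simp [htn, heq] at this
      exact absurd this (not_lt.mpr hε.le)
    have hεle : ∀ n, ε ≤ E (tn n) := fun n =>
      ((hw n).trans_le (hcontr _ _ (hne n))).le
    have hb : IsBoundedUnder (· ≤ ·) atTop (fun n => E (tn n)) := by
      refine ⟨ε + 1, eventually_map.mpr (Eventually.of_forall fun n => ?_)⟩
      have : E (tn n) < tn n := h1 _ (hε.trans (hlt n))
      have h3 : (1:ℝ)/(n+1) ≤ 1 := by
        rw [div_le_one (by positivity)]; linarith [Nat.cast_nonneg (α := ℝ) n]
      linarith [hub n]
    have : ε ≤ liminf (fun n => E (tn n)) atTop :=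
      le_liminf_of_le hb.isCoboundedUnder_ge (Eventually.of_forall hεle)
    exact absurd hliminf (not_lt.mpr this)
  obtain ⟨u, huf, hut⟩ := orbit_conv T hle hstrict hMW (Classical.arbitrary X)
  have huniq : ∀ v : X, T v = v → v = u := by
    intro v hv
    by_contra hne
    have := hstrict v u hne
    rw [hv, huf] at this
    exact lt_irrefl _ this
  refine ⟨u, huf, huniq, fun x => ?_⟩
  obtain ⟨w, hwf, hwt⟩ := orbit_conv T hle hstrict hMW x
  rwa [huniq w hwf] at hwt
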